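/- arXiv:2210.08268 — 2 statements merged into one kernel-verified Lean document; each statement's English description precedes it below -/
import Mathlib

section
/- Let m, N, T ≥ 1 be integers and α > 0. Let Φ : {1,…,T} → {0,…,N}, and let y_{t,k} ∈ ℝ^m with ‖y_{t,k}‖ ≤ 1 for each t ∈ {1,…,T} and k ∈ {1,…,Φ_t}. Define Σ_0 := α I_m and Σ_t := Σ_{t−1} + Σ_{k=1}^{Φ_t} y_{t,k} y_{t,k}ᵀ, and g_{t,k}² := y_{t,k}ᵀ (Σ_{t−1})^{−1} y_{t,k}. Then Σ_{t=1}^{T} Σ_{k=1}^{Φ_t} g_{t,k}² ≤ N m log(1 + TN/(m α)) / (α log(1 + α^{−1})). -/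
open Finset Matrix

/-- `Sig m α Φ y t = Σ_t`: the regularized Gram matrix after `t` rounds, defined by
`Σ_0 = α I_m` and `Σ_t = Σ_{t-1} + Σ_{k=1}^{Φ_t} y_{t,k} y_{t,k}ᵀ`. -/
noncomputable def Sig (m : ℕ) (α : ℝ) (Φ : ℕ → ℕ) (y : ℕ → ℕ → Fin m → ℝ) :
    ℕ → Matrix (Fin m) (Fin m) ℝ
  | 0 => α • (1 : Matrix (Fin m) (Fin m) ℝ)
  | t + 1 => Sig m α Φ y t +
      ∑ k ∈ Finset.Icc 1 (Φ (t + 1)), Matrix.vecMulVec (y (t + 1) k) (y (t + 1) k)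


-- outer product is PSD
lemma psd_vecMulVec {m : ℕ} (v : Fin m → ℝ) : (Matrix.vecMulVec v v).PosSemidef := by
  rw [vecMulVec_eq Unit]
  have h := Matrix.posSemidef_conjTranspose_mul_self (Matrix.replicateRow Unit v)
  simpa [Matrix.conjTranspose_replicateRow] using h

lemma psd_sum {m : ℕ} {s : Finset ℕ} (f : ℕ → Matrix (Fin m) (Fin m) ℝ)
    (h : ∀ k ∈ s, (f k).PosSemidef) : (∑ k ∈ s, f k).PosSemidef := by
  classical
  induction s using Finset.induction with
  | empty => simpa using Matrix.PosSemidef.zero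
  | @insert a s' hk ih =>
    rw [Finset.sum_insert hk]
    exact (h a (Finset.mem_insert_self a s')).add (ih fun k hks => h k (Finset.mem_insert_of_mem hks))

-- M psd → 1 ≤ det (1 + M)
lemma one_le_det_one_add {n : Type*} [Fintype n] [DecidableEq n]
    {M : Matrix n n ℝ} (hM : M.PosSemidef) : 1 ≤ (1 + M).det := by
  have hH : (1 + M).IsHermitian := Matrix.isHermitian_one.add hM.isHermitian
  have heig : ∀ i, 1 ≤ hH.eigenvalues i := by
    intro i
    have hv := hH.eigenvalues_eq i
    set v : n → ℝ := ⇑(hH.eigenvectorBasis i) with hvdef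
    have hnorm : ‖(hH.eigenvectorBasis i)‖ = 1 := hH.eigenvectorBasis.orthonormal.1 i
    have hvv : v ⬝ᵥ v = 1 := by
      have h2 : (star v) ⬝ᵥ v = (inner ℝ (hH.eigenvectorBasis i) (hH.eigenvectorBasis i) : ℝ) := by
        rw [EuclideanSpace.inner_eq_star_dotProduct]
        exact dotProduct_comm _ _
      rw [real_inner_self_eq_norm_sq, hnorm] at h2
      simpa using h2
    have h3 : hH.eigenvalues i = v ⬝ᵥ ((1 + M) *ᵥ v) := by simpa using hv
    rw [h3, Matrix.add_mulVec, Matrix.one_mulVec, dotProduct_add, hvv]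
    have h4 := hM.dotProduct_mulVec_nonneg v
    simp only [star_trivial] at h4
    linarith
  rw [hH.det_eq_prod_eigenvalues]
  simp only [RCLike.ofReal_real_eq_id, id_eq]
  have h1 : ∏ _x : n, (1:ℝ) ≤ ∏ x : n, hH.eigenvalues x :=
    Finset.prod_le_prod (by intro i _; norm_num) (fun i _ => heig i)
  simpa using h1

-- det monotone: A posdef, P psd → det A ≤ det (A+P)
lemma det_le_det_add {n : Type*} [Fintype n] [DecidableEq n]
    {A P : Matrix n n ℝ} (hA : A.PosDef) (hP : P.PosSemidef) :
    A.det ≤ (A + P).det := by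
  open MatrixOrder in
  obtain ⟨C, hC⟩ := CStarAlgebra.nonneg_iff_eq_star_mul_self.mp hP.nonneg
  rw [Matrix.star_eq_conjTranspose] at hC
  have hdet : (A + Cᴴ * C).det = A.det * (1 + C * A⁻¹ * Cᴴ).det := by
    rw [Matrix.det_add_mul Cᴴ C hA.det_pos.ne'.isUnit, Matrix.mul_assoc]
  have hpsd : (C * A⁻¹ * Cᴴ).PosSemidef := hA.inv.posSemidef.mul_mul_conjTranspose_same C
  have h1 : 1 ≤ (1 + C * A⁻¹ * Cᴴ).det := one_le_det_one_add hpsd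
  calc A.det = A.det * 1 := (mul_one _).symm
    _ ≤ A.det * (1 + C * A⁻¹ * Cᴴ).det := by
        exact mul_le_mul_of_nonneg_left h1 hA.det_pos.le
    _ = (A + P).det := by rw [← hdet, hC]

-- matrix determinant lemma
lemma det_add_outer {n : Type*} [Fintype n] [DecidableEq n]
    {A : Matrix n n ℝ} (hA : A.PosDef) (v : n → ℝ) :
    (A + Matrix.vecMulVec v v).det = A.det * (1 + v ⬝ᵥ (A⁻¹ *ᵥ v)) := by
  rw [vecMulVec_eq Unit, Matrix.det_add_replicateCol_mul_replicateRow hA.det_pos.ne'.isUnit]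
  congr 1
  rw [Matrix.det_unique, Matrix.mul_assoc, ← Matrix.replicateCol_mulVec, Matrix.add_apply,
    Matrix.one_apply_eq, Matrix.replicateRow_mul_replicateCol_apply]

-- trace = sum of eigenvalues (real case)
lemma trace_eq_sum_eig {n : Type*} [Fintype n] [DecidableEq n]
    {A : Matrix n n ℝ} (hA : A.IsHermitian) :
    A.trace = ∑ i, hA.eigenvalues i := by
  simpa using hA.trace_eq_sum_eigenvalues

-- AM-GM: det ≤ (trace/m)^m for posdef matrices
lemma det_le_trace_div_pow {m : ℕ} (hm : 1 ≤ m)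
    {A : Matrix (Fin m) (Fin m) ℝ} (hA : A.PosDef) :
    A.det ≤ (A.trace / m) ^ m := by
  have hH := hA.isHermitian
  have heig : ∀ i, 0 < hH.eigenvalues i := hA.eigenvalues_pos
  rw [hH.det_eq_prod_eigenvalues, trace_eq_sum_eig hH]
  simp only [RCLike.ofReal_real_eq_id, id_eq]
  have hmR : (0:ℝ) < m := by positivity
  have amgm := Real.geom_mean_le_arith_mean_weighted Finset.univ
      (fun _ : Fin m => 1 / m) hH.eigenvalues
      (fun i _ => by positivity)
      (by simp [Finset.card_univ]; field_simp)
      (fun i _ => (heig i).le)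
  have key : ∏ i, hH.eigenvalues i ≤ (∑ i, (1/m : ℝ) * hH.eigenvalues i) ^ m := by
    have h1 : (∏ i, hH.eigenvalues i ^ (1/m : ℝ)) ^ (m:ℝ) = ∏ i, hH.eigenvalues i := by
      rw [Real.finset_prod_rpow _ _ (fun i _ => (heig i).le),
        ← Real.rpow_mul (Finset.prod_nonneg fun i _ => (heig i).le)]
      rw [one_div, inv_mul_cancel₀ hmR.ne', Real.rpow_one]
    rw [← h1, ← Real.rpow_natCast (∑ i, (1/m : ℝ) * hH.eigenvalues i) m,
      Real.rpow_natCast _ m, ← Real.rpow_natCast _ m]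
    apply Real.rpow_le_rpow (Finset.prod_nonneg fun i _ => (Real.rpow_nonneg (heig i).le _)) amgm
    positivity
  calc (∏ i, hH.eigenvalues i) ≤ (∑ i, (1/m:ℝ) * hH.eigenvalues i) ^ m := key
    _ = ((∑ i, hH.eigenvalues i) / m) ^ m := by rw [← Finset.mul_sum]; ring_nf

lemma sig_posDef {m : ℕ} {α : ℝ} (hα : 0 < α) (Φ : ℕ → ℕ) (y : ℕ → ℕ → Fin m → ℝ) :
    ∀ t, (Sig m α Φ y t).PosDef := by
  intro t
  induction t with
  | zero =>
    show (α • (1 : Matrix (Fin m) (Fin m) ℝ)).PosDef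
    rw [Matrix.smul_one_eq_diagonal]
    exact Matrix.PosDef.diagonal (fun _ => hα)
  | succ t ih =>
    exact ih.add_posSemidef (psd_sum _ (fun k _ => psd_vecMulVec _))

lemma sig_quad_lower {m : ℕ} {α : ℝ} (hα : 0 < α) (Φ : ℕ → ℕ) (y : ℕ → ℕ → Fin m → ℝ) :
    ∀ t (z : Fin m → ℝ), α * (z ⬝ᵥ z) ≤ z ⬝ᵥ (Sig m α Φ y t *ᵥ z) := by
  intro t
  induction t with
  | zero =>
    intro z
    show α * (z ⬝ᵥ z) ≤ z ⬝ᵥ ((α • (1 : Matrix (Fin m) (Fin m) ℝ)) *ᵥ z)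
    rw [Matrix.smul_mulVec, Matrix.one_mulVec, dotProduct_smul]
    simp [smul_eq_mul]
  | succ t ih =>
    intro z
    show α * (z ⬝ᵥ z) ≤ z ⬝ᵥ ((Sig m α Φ y t + _) *ᵥ z)
    rw [Matrix.add_mulVec, dotProduct_add]
    have h2 := (psd_sum (fun k => Matrix.vecMulVec (y (t+1) k) (y (t+1) k))
      (fun k _ => psd_vecMulVec _) (s := Finset.Icc 1 (Φ (t+1)))).dotProduct_mulVec_nonneg z
    simp only [star_trivial] at h2
    linarith [ih z]

-- the g² ≤ α⁻¹ bound
lemma quad_inv_bounds {m : ℕ} {α : ℝ} (hα : 0 < α) {A : Matrix (Fin m) (Fin m) ℝ}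
    (hA : A.PosDef) (hlow : ∀ z : Fin m → ℝ, α * (z ⬝ᵥ z) ≤ z ⬝ᵥ (A *ᵥ z))
    {v : Fin m → ℝ} (hv : v ⬝ᵥ v ≤ 1) :
    0 ≤ v ⬝ᵥ (A⁻¹ *ᵥ v) ∧ v ⬝ᵥ (A⁻¹ *ᵥ v) ≤ α⁻¹ := by
  set z := A⁻¹ *ᵥ v with hz
  have hAz : A *ᵥ z = v := by
    rw [hz, Matrix.mulVec_mulVec, Matrix.mul_nonsing_inv A hA.det_pos.ne'.isUnit, Matrix.one_mulVec]
  have hq : v ⬝ᵥ z = z ⬝ᵥ (A *ᵥ z) := by rw [hAz, dotProduct_comm]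
  set q := v ⬝ᵥ z with hqdef
  set a := z ⬝ᵥ z with hadef
  have ha0 : 0 ≤ a := by
    have := Finset.sum_nonneg (s := Finset.univ) (f := fun i => z i * z i)
      (fun i _ => mul_self_nonneg (z i))
    simpa [hadef, dotProduct] using this
  have h1 : α * a ≤ q := by rw [hq]; exact hlow z
  have hcs : q ^ 2 ≤ (v ⬝ᵥ v) * a := by
    have := Finset.sum_mul_sq_le_sq_mul_sq Finset.univ v z
    simpa [hqdef, hadef, dotProduct, pow_two] using this
  have h2 : q ^ 2 ≤ a := le_trans hcs (by nlinarith)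
  constructor
  · nlinarith
  · have h3 : α * q ^ 2 ≤ q := le_trans (mul_le_mul_of_nonneg_left h2 hα.le) h1
    rcases le_or_gt q 0 with hq0 | hq0
    · exact le_trans hq0 (by positivity)
    · rw [inv_eq_one_div, le_div_iff₀ hα]
      nlinarith

lemma log_lb {c x : ℝ} (hc : 0 < c) (hx0 : 0 ≤ x) (hxc : x ≤ c) :
    x * Real.log (1 + c) ≤ c * Real.log (1 + x) := by
  have hxc1 : x / c ≤ 1 := (div_le_one hc).2 hxc
  have h := strictConcaveOn_log_Ioi.concaveOn.2 (Set.mem_Ioi.2 one_pos)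
    (Set.mem_Ioi.2 (by linarith : (0:ℝ) < 1 + c))
    (show (0:ℝ) ≤ 1 - x / c by linarith [hxc1]) (show (0:ℝ) ≤ x / c by positivity)
    (show (1 - x / c) + x / c = 1 by ring)
  have harg : (1 - x / c) • (1:ℝ) + (x / c) • (1 + c) = 1 + x := by
    simp only [smul_eq_mul]
    field_simp
    ring
  rw [harg, Real.log_one, smul_eq_mul, smul_eq_mul, mul_zero, zero_add] at h
  rw [mul_comm x (Real.log (1+c))]
  calc Real.log (1 + c) * x = c * (x / c * Real.log (1 + c)) := by
        field_simp
    _ ≤ c * Real.log (1 + x) := mul_le_mul_of_nonneg_left h hc.le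

lemma telescope (f : ℕ → ℝ) (T : ℕ) :
    ∑ t ∈ Finset.Icc 1 T, (f t - f (t - 1)) = f T - f 0 := by
  induction T with
  | zero => simp
  | succ T ih =>
    rw [Finset.sum_Icc_succ_top (by omega), ih]
    simp only [Nat.add_sub_cancel]
    ring

lemma sig_trace {m : ℕ} (α : ℝ) (Φ : ℕ → ℕ) (y : ℕ → ℕ → Fin m → ℝ) (T : ℕ) :
    (Sig m α Φ y T).trace
      = α * m + ∑ t ∈ Finset.Icc 1 T, ∑ k ∈ Finset.Icc 1 (Φ t), (y t k ⬝ᵥ y t k) := by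
  induction T with
  | zero =>
    show (α • (1 : Matrix (Fin m) (Fin m) ℝ)).trace = _
    simp [Matrix.trace_smul, Matrix.trace_one]
  | succ T ih =>
    show (Sig m α Φ y T + _).trace = _
    rw [Matrix.trace_add, ih, Finset.sum_Icc_succ_top (by omega : 1 ≤ T + 1), Matrix.trace_sum]
    have : ∀ k, (Matrix.vecMulVec (y (T+1) k) (y (T+1) k)).trace = y (T+1) k ⬝ᵥ y (T+1) k := by
      intro k
      rw [vecMulVec_eq Unit, Matrix.trace_replicateCol_mul_replicateRow]
    simp only [this]
    ring

lemma det_step {m : ℕ} {α : ℝ} (hα : 0 < α) (Φ : ℕ → ℕ) (y : ℕ → ℕ → Fin m → ℝ)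
    (s k : ℕ) (hk : k ∈ Finset.Icc 1 (Φ (s+1))) :
    (1 + y (s+1) k ⬝ᵥ ((Sig m α Φ y s)⁻¹ *ᵥ y (s+1) k)) * (Sig m α Φ y s).det
      ≤ (Sig m α Φ y (s+1)).det := by
  set A := Sig m α Φ y s with hA
  have hApd : A.PosDef := sig_posDef hα Φ y s
  have hsum := Finset.add_sum_erase (Finset.Icc 1 (Φ (s+1)))
    (fun j => Matrix.vecMulVec (y (s+1) j) (y (s+1) j)) hk
  have hsplit : Sig m α Φ y (s+1)
      = (A + Matrix.vecMulVec (y (s+1) k) (y (s+1) k))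
        + ∑ j ∈ (Finset.Icc 1 (Φ (s+1))).erase k,
            Matrix.vecMulVec (y (s+1) j) (y (s+1) j) := by
    show A + _ = _
    rw [add_assoc, hsum]
  have h1 : (A + Matrix.vecMulVec (y (s+1) k) (y (s+1) k)).det
      ≤ ((A + Matrix.vecMulVec (y (s+1) k) (y (s+1) k))
        + ∑ j ∈ (Finset.Icc 1 (Φ (s+1))).erase k,
            Matrix.vecMulVec (y (s+1) j) (y (s+1) j)).det :=
    det_le_det_add (hApd.add_posSemidef (psd_vecMulVec _))
      (psd_sum _ (fun j _ => psd_vecMulVec (y (s+1) j)))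
  rw [hsplit]
  refine le_trans (le_of_eq ?_) h1
  rw [det_add_outer hApd]
  ring

/-- the sum-of-squares elliptical potential bound
`Σ_{t=1}^T Σ_{k=1}^{Φ_t} g_{t,k}² ≤ N m log(1 + TN/(mα)) / (α log(1 + α⁻¹))`, where
`g_{t,k}² = y_{t,k}ᵀ (Σ_{t-1})⁻¹ y_{t,k}`. -/
theorem stmt15 (m N T : ℕ) (hm : 1 ≤ m) (hN : 1 ≤ N) (hT : 1 ≤ T)
    (α : ℝ) (hα : 0 < α)
    (Φ : ℕ → ℕ) (hΦ : ∀ t ∈ Finset.Icc 1 T, Φ t ≤ N)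
    (y : ℕ → ℕ → Fin m → ℝ)
    (hy : ∀ t ∈ Finset.Icc 1 T, ∀ k ∈ Finset.Icc 1 (Φ t),
      Real.sqrt (y t k ⬝ᵥ y t k) ≤ 1) :
    ∑ t ∈ Finset.Icc 1 T, ∑ k ∈ Finset.Icc 1 (Φ t),
        y t k ⬝ᵥ (Sig m α Φ y (t - 1))⁻¹ *ᵥ y t k ≤
      (N : ℝ) * m * Real.log (1 + T * N / (m * α)) / (α * Real.log (1 + α⁻¹)) := by
  have hαinv : (0:ℝ) < α⁻¹ := inv_pos.2 hα
  have hL : 0 < Real.log (1 + α⁻¹) := Real.log_pos (by linarith)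
  set c0 : ℝ := α⁻¹ / Real.log (1 + α⁻¹) with hc0
  have hc0pos : 0 < c0 := by positivity
  set f : ℕ → ℝ := fun t => Real.log (Sig m α Φ y t).det with hf
  -- dot products are small
  have hyy : ∀ t ∈ Finset.Icc 1 T, ∀ k ∈ Finset.Icc 1 (Φ t), y t k ⬝ᵥ y t k ≤ 1 := by
    intro t ht k hk
    have h0 : 0 ≤ y t k ⬝ᵥ y t k := by
      have := Finset.sum_nonneg (s := Finset.univ) (f := fun i => y t k i * y t k i)
        (fun i _ => mul_self_nonneg _)
      simpa [dotProduct] using this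
    have hs := hy t ht k hk
    nlinarith [Real.sq_sqrt h0, Real.sqrt_nonneg (y t k ⬝ᵥ y t k)]
  have hyy0 : ∀ (t k : ℕ), 0 ≤ y t k ⬝ᵥ y t k := by
    intro t k
    have := Finset.sum_nonneg (s := Finset.univ) (f := fun i => y t k i * y t k i)
      (fun i _ => mul_self_nonneg _)
    simpa [dotProduct] using this
  -- g bounds
  have hg : ∀ t ∈ Finset.Icc 1 T, ∀ k ∈ Finset.Icc 1 (Φ t),
      0 ≤ y t k ⬝ᵥ (Sig m α Φ y (t-1))⁻¹ *ᵥ y t k ∧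
      y t k ⬝ᵥ (Sig m α Φ y (t-1))⁻¹ *ᵥ y t k ≤ α⁻¹ := by
    intro t ht k hk
    exact quad_inv_bounds hα (sig_posDef hα Φ y (t-1)) (sig_quad_lower hα Φ y (t-1))
      (hyy t ht k hk)
  -- per-term bound by log-det increments
  have hdets : ∀ s, (0:ℝ) < (Sig m α Φ y s).det := fun s => (sig_posDef hα Φ y s).det_pos
  have hstep : ∀ t ∈ Finset.Icc 1 T, ∀ k ∈ Finset.Icc 1 (Φ t),
      y t k ⬝ᵥ (Sig m α Φ y (t-1))⁻¹ *ᵥ y t k ≤ c0 * (f t - f (t - 1)) := by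
    intro t ht k hk
    obtain ⟨g0, gα⟩ := hg t ht k hk
    set g := y t k ⬝ᵥ (Sig m α Φ y (t-1))⁻¹ *ᵥ y t k with hgdef
    have hlog1 : g * Real.log (1 + α⁻¹) ≤ α⁻¹ * Real.log (1 + g) :=
      log_lb hαinv g0 gα
    have ht1 : 1 ≤ t := (Finset.mem_Icc.mp ht).1
    obtain ⟨s, rfl⟩ : ∃ s, t = s + 1 := ⟨t - 1, by omega⟩
    have hks : k ∈ Finset.Icc 1 (Φ (s+1)) := by simpa using hk
    have hdet := det_step hα Φ y s k hks
    have hss : (s + 1) - 1 = s := by omega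
    rw [hss] at hgdef ⊢
    have hlog2 : Real.log (1 + g) ≤ f (s+1) - f s := by
      have h1g : (0:ℝ) < 1 + g := by linarith
      rw [← hgdef] at hdet
      have hlog3 := Real.log_le_log (mul_pos h1g (hdets s)) hdet
      rw [Real.log_mul h1g.ne' (hdets s).ne'] at hlog3
      show Real.log (1 + g) ≤ Real.log (Sig m α Φ y (s+1)).det - Real.log (Sig m α Φ y s).det
      linarith
    calc g ≤ c0 * Real.log (1 + g) := by
          rw [hc0, div_mul_eq_mul_div, le_div_iff₀ hL]
          linarith
      _ ≤ c0 * (f (s+1) - f s) := mul_le_mul_of_nonneg_left hlog2 hc0pos.le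
  -- increments are nonneg
  have hmono : ∀ s, f s ≤ f (s + 1) := by
    intro s
    apply Real.log_le_log (hdets s)
    exact det_le_det_add (sig_posDef hα Φ y s) (psd_sum _ (fun j _ => psd_vecMulVec _))
  have hincr : ∀ t ∈ Finset.Icc 1 T, 0 ≤ f t - f (t - 1) := by
    intro t ht
    have ht1 : 1 ≤ t := (Finset.mem_Icc.mp ht).1
    obtain ⟨s, rfl⟩ : ∃ s, t = s + 1 := ⟨t - 1, by omega⟩
    rw [Nat.add_sub_cancel]
    linarith [hmono s]
  -- sum bound
  have hsum1 : ∑ t ∈ Finset.Icc 1 T, ∑ k ∈ Finset.Icc 1 (Φ t),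
      y t k ⬝ᵥ (Sig m α Φ y (t - 1))⁻¹ *ᵥ y t k
      ≤ c0 * (N : ℝ) * (f T - f 0) := by
    calc ∑ t ∈ Finset.Icc 1 T, ∑ k ∈ Finset.Icc 1 (Φ t),
          y t k ⬝ᵥ (Sig m α Φ y (t - 1))⁻¹ *ᵥ y t k
        ≤ ∑ t ∈ Finset.Icc 1 T, ∑ k ∈ Finset.Icc 1 (Φ t), c0 * (f t - f (t - 1)) := by
          apply Finset.sum_le_sum
          intro t ht
          exact Finset.sum_le_sum (fun k hk => hstep t ht k hk)
      _ = ∑ t ∈ Finset.Icc 1 T, (Φ t : ℝ) * (c0 * (f t - f (t - 1))) := by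
          apply Finset.sum_congr rfl
          intro t _
          rw [Finset.sum_const, Nat.card_Icc]
          simp [nsmul_eq_mul]
      _ ≤ ∑ t ∈ Finset.Icc 1 T, (N : ℝ) * (c0 * (f t - f (t - 1))) := by
          apply Finset.sum_le_sum
          intro t ht
          apply mul_le_mul_of_nonneg_right _ (mul_nonneg hc0pos.le (hincr t ht))
          exact_mod_cast hΦ t ht
      _ = c0 * (N : ℝ) * (f T - f 0) := by
          rw [← Finset.mul_sum, ← telescope f T, ← Finset.mul_sum]
          ring
  -- bound f T - f 0
  have hmR : (0:ℝ) < m := by positivity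
  have hW : (0:ℝ) ≤ ∑ t ∈ Finset.Icc 1 T, ∑ k ∈ Finset.Icc 1 (Φ t), y t k ⬝ᵥ y t k :=
    Finset.sum_nonneg fun t _ => Finset.sum_nonneg fun k _ => hyy0 t k
  have hWle : ∑ t ∈ Finset.Icc 1 T, ∑ k ∈ Finset.Icc 1 (Φ t), y t k ⬝ᵥ y t k
      ≤ (T : ℝ) * N := by
    calc ∑ t ∈ Finset.Icc 1 T, ∑ k ∈ Finset.Icc 1 (Φ t), y t k ⬝ᵥ y t k
        ≤ ∑ t ∈ Finset.Icc 1 T, (N : ℝ) := by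
          apply Finset.sum_le_sum
          intro t ht
          calc ∑ k ∈ Finset.Icc 1 (Φ t), y t k ⬝ᵥ y t k
              ≤ ∑ k ∈ Finset.Icc 1 (Φ t), (1:ℝ) :=
                Finset.sum_le_sum (fun k hk => hyy t ht k hk)
            _ = (Φ t : ℝ) := by rw [Finset.sum_const, Nat.card_Icc]; simp
            _ ≤ (N : ℝ) := by exact_mod_cast hΦ t ht
      _ = (T : ℝ) * N := by rw [Finset.sum_const, Nat.card_Icc]; simp [nsmul_eq_mul]
  have hfT : f T - f 0 ≤ (m : ℝ) * Real.log (1 + T * N / (m * α)) := by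
    set W := ∑ t ∈ Finset.Icc 1 T, ∑ k ∈ Finset.Icc 1 (Φ t), y t k ⬝ᵥ y t k with hWdef
    have htr : (Sig m α Φ y T).trace = α * m + W := sig_trace α Φ y T
    have htrpos : (0:ℝ) < α * m + W := by nlinarith
    have hf0 : f 0 = (m:ℝ) * Real.log α := by
      show Real.log (α • (1 : Matrix (Fin m) (Fin m) ℝ)).det = _
      rw [Matrix.det_smul, Matrix.det_one, mul_one]
      simp [Real.log_pow]
    have hfT1 : f T ≤ (m:ℝ) * Real.log ((α * m + W) / m) := by
      have hd := det_le_trace_div_pow hm (sig_posDef hα Φ y T)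
      rw [htr] at hd
      have := Real.log_le_log (hdets T) hd
      rw [Real.log_pow] at this
      exact this
    have key : (m:ℝ) * Real.log ((α * m + W) / m) - (m:ℝ) * Real.log α
        ≤ (m : ℝ) * Real.log (1 + T * N / (m * α)) := by
      rw [← mul_sub]
      apply mul_le_mul_of_nonneg_left _ hmR.le
      rw [← Real.log_div (by positivity) hα.ne']
      apply Real.log_le_log (by positivity)
      rw [div_le_iff₀ hα, div_le_iff₀ hmR]
      have hexp : (1 + (T:ℝ) * N / (m * α)) * α * m = α * m + T * N := by
        field_simp
      linarith [hWle]
    linarith [hfT1, key]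
  calc ∑ t ∈ Finset.Icc 1 T, ∑ k ∈ Finset.Icc 1 (Φ t),
        y t k ⬝ᵥ (Sig m α Φ y (t - 1))⁻¹ *ᵥ y t k
      ≤ c0 * (N : ℝ) * (f T - f 0) := hsum1
    _ ≤ c0 * (N : ℝ) * ((m : ℝ) * Real.log (1 + T * N / (m * α))) := by
        apply mul_le_mul_of_nonneg_left hfT
        positivity
    _ = (N : ℝ) * m * Real.log (1 + T * N / (m * α)) / (α * Real.log (1 + α⁻¹)) := by
        rw [hc0]
        field_simp
end

section
/- Let N ≥ 1, let σ be a permutation of {1,…,N}, let λ, λ̃ : {1,…,N} → [0,1], and let q, q̃, s, s̃ ∈ [0,1]. Then for every 1 ≤ k ≤ N, | A_σ(k; q, s, λ) − A_σ(k; q̃, s̃, λ̃) | ≤ Σ_{u=1}^{k−1} ( |q − q̃| (1 − λ_{σ_u}) + 2 |λ_{σ_u} − λ̃_{σ_u}| + |q s − q̃ s̃| λ_{σ_u} ) · A_σ(u; q, s, λ) · q̃^{k−u−1}. -/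
open Finset

/-- `Hfun σ lam k u = H_σ(k,u;λ)`: the probability that exactly `u` of the first `k-1`
displayed products are purchased (ignoring attention span and budget). -/
noncomputable def Hfun (σ : ℕ → ℕ) (lam : ℕ → ℝ) (k u : ℕ) : ℝ :=
  ∑ Q ∈ (Finset.Icc 1 (k - 1)).powersetCard u,
    (∏ i ∈ Q, lam (σ i)) * ∏ i ∈ Finset.Icc 1 (k - 1) \ Q, (1 - lam (σ i))

/-- `Afun σ lam q s k = A_σ(k; q, s, λ) = q^{k-1} Σ_{u=0}^{k-1} s^u H_σ(k,u;λ)`. -/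
noncomputable def Afun (σ : ℕ → ℕ) (lam : ℕ → ℝ) (q s : ℝ) (k : ℕ) : ℝ :=
  q ^ (k - 1) * ∑ u ∈ Finset.range k, s ^ u * Hfun σ lam k u

lemma Afun_eq (σ : ℕ → ℕ) (lam : ℕ → ℝ) (q s : ℝ) (k : ℕ) (hk : 1 ≤ k) :
    Afun σ lam q s k = q ^ (k - 1) * ∏ i ∈ Icc 1 (k - 1), (s * lam (σ i) + (1 - lam (σ i))) := by
  unfold Afun Hfun
  congr 1
  rw [Finset.prod_add]
  classical
  rw [Finset.powerset_card_biUnion, Finset.sum_biUnion]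
  · have hcard : (Icc 1 (k-1)).card = k - 1 := by rw [Nat.card_Icc]; omega
    rw [hcard]
    have hk' : k - 1 + 1 = k := by omega
    rw [hk']
    refine Finset.sum_congr rfl fun u _ => ?_
    rw [Finset.mul_sum]
    refine Finset.sum_congr rfl fun Q hQ => ?_
    have hQc : Q.card = u := (Finset.mem_powersetCard.mp hQ).2
    rw [← mul_assoc]
    congr 1
    rw [Finset.prod_mul_distrib, Finset.prod_const, hQc]
  · intro a _ b _ hab
    exact Finset.disjoint_left.mpr fun Q hQa hQb => hab
      ((Finset.mem_powersetCard.mp hQa).2 ▸ (Finset.mem_powersetCard.mp hQb).2.symm ▸ rfl)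

lemma Afun_rec (σ : ℕ → ℕ) (lam : ℕ → ℝ) (q s : ℝ) (k : ℕ) (hk : 1 ≤ k) :
    Afun σ lam q s (k + 1)
      = q * (s * lam (σ k) + (1 - lam (σ k))) * Afun σ lam q s k := by
  rw [Afun_eq σ lam q s (k+1) (by omega), Afun_eq σ lam q s k hk]
  have h1 : k + 1 - 1 = k := rfl
  have h2 : Icc 1 k = insert k (Icc 1 (k-1)) := by
    ext i; simp [Finset.mem_Icc, Finset.mem_insert]; omega
  have h3 : k ∉ Icc 1 (k-1) := by simp [Finset.mem_Icc]; omega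
  rw [h1, h2, Finset.prod_insert h3]
  have h4 : q ^ k = q * q ^ (k - 1) := by
    conv_lhs => rw [show k = (k-1)+1 by omega]
    ring
  rw [h4]; ring

lemma Afun_nonneg (N : ℕ) (σ : ℕ → ℕ) (lam : ℕ → ℝ)
    (hlam : ∀ k ∈ Set.Icc 1 N, lam k ∈ Set.Icc (0 : ℝ) 1)
    (hσ : Set.MapsTo σ (Set.Icc 1 N) (Set.Icc 1 N))
    (q s : ℝ) (hq : 0 ≤ q) (hs : 0 ≤ s) (k : ℕ) (hk : 1 ≤ k) (hkN : k ≤ N) :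
    0 ≤ Afun σ lam q s k := by
  rw [Afun_eq σ lam q s k hk]
  apply mul_nonneg (pow_nonneg hq _)
  apply Finset.prod_nonneg
  intro i hi
  simp only [Finset.mem_Icc] at hi
  have hσi := hσ (Set.mem_Icc.mpr ⟨hi.1, by omega⟩)
  have := hlam _ hσi
  simp only [Set.mem_Icc] at this
  nlinarith [this.1, this.2]

/-- perturbation bound for `A_σ(k; q, s, λ)`. -/
theorem stmt18 (N : ℕ) (hN : 1 ≤ N) (σ : ℕ → ℕ)
    (hσ : Set.BijOn σ (Set.Icc 1 N) (Set.Icc 1 N))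
    (lam lamT : ℕ → ℝ)
    (hlam : ∀ k ∈ Set.Icc 1 N, lam k ∈ Set.Icc (0 : ℝ) 1)
    (hlamT : ∀ k ∈ Set.Icc 1 N, lamT k ∈ Set.Icc (0 : ℝ) 1)
    (q qT s sT : ℝ)
    (hq : q ∈ Set.Icc (0 : ℝ) 1) (hqT : qT ∈ Set.Icc (0 : ℝ) 1)
    (hs : s ∈ Set.Icc (0 : ℝ) 1) (hsT : sT ∈ Set.Icc (0 : ℝ) 1)
    (k : ℕ) (hk1 : 1 ≤ k) (hkN : k ≤ N) :
    |Afun σ lam q s k - Afun σ lamT qT sT k| ≤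
      ∑ u ∈ Finset.Icc 1 (k - 1),
        (|q - qT| * (1 - lam (σ u)) + 2 * |lam (σ u) - lamT (σ u)| +
            |q * s - qT * sT| * lam (σ u)) *
          Afun σ lam q s u * qT ^ (k - u - 1) := by
  obtain ⟨hq0, hq1⟩ := hq
  obtain ⟨hqT0, hqT1⟩ := hqT
  obtain ⟨hs0, hs1⟩ := hs
  obtain ⟨hsT0, hsT1⟩ := hsT
  induction k, hk1 using Nat.le_induction with
  | base =>
    have h1 : Afun σ lam q s 1 = 1 := by
      rw [Afun_eq σ lam q s 1 le_rfl]; simp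
    have h2 : Afun σ lamT qT sT 1 = 1 := by
      rw [Afun_eq σ lamT qT sT 1 le_rfl]; simp
    simp [h1, h2]
  | succ k hk ih =>
    have hkN' : k ≤ N := by omega
    have ih' := ih hkN'
    have hσk : σ k ∈ Set.Icc 1 N := hσ.mapsTo (Set.mem_Icc.mpr ⟨hk, hkN'⟩)
    have hlak := hlam _ hσk
    have hlbk := hlamT _ hσk
    simp only [Set.mem_Icc] at hlak hlbk
    have hrecA := Afun_rec σ lam q s k hk
    have hrecB := Afun_rec σ lamT qT sT k hk
    have ha0 : 0 ≤ Afun σ lam q s k :=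
      Afun_nonneg N σ lam hlam hσ.mapsTo q s hq0 hs0 k hk hkN'
    have hfac0 : (0:ℝ) ≤ sT * lamT (σ k) + (1 - lamT (σ k)) := by
      nlinarith [mul_nonneg hsT0 hlbk.1]
    have hfac1 : sT * lamT (σ k) + (1 - lamT (σ k)) ≤ 1 := by
      nlinarith [hlbk.1, hlbk.2]
    have hd0 : 0 ≤ qT * (sT * lamT (σ k) + (1 - lamT (σ k))) := mul_nonneg hqT0 hfac0
    have hdqT : qT * (sT * lamT (σ k) + (1 - lamT (σ k))) ≤ qT := by
      calc qT * (sT * lamT (σ k) + (1 - lamT (σ k))) ≤ qT * 1 :=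
            mul_le_mul_of_nonneg_left hfac1 hqT0
        _ = qT := mul_one qT
    -- bound on |c - d|
    have hcd : |q * (s * lam (σ k) + (1 - lam (σ k)))
          - qT * (sT * lamT (σ k) + (1 - lamT (σ k)))|
        ≤ |q - qT| * (1 - lam (σ k)) + 2 * |lam (σ k) - lamT (σ k)|
          + |q * s - qT * sT| * lam (σ k) := by
      have e : q * (s * lam (σ k) + (1 - lam (σ k)))
            - qT * (sT * lamT (σ k) + (1 - lamT (σ k)))
          = (q - qT) * (1 - lam (σ k))
            + (qT * sT - qT) * (lam (σ k) - lamT (σ k))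
            + (q * s - qT * sT) * lam (σ k) := by ring
      calc |q * (s * lam (σ k) + (1 - lam (σ k)))
            - qT * (sT * lamT (σ k) + (1 - lamT (σ k)))|
          ≤ |(q - qT) * (1 - lam (σ k))| + |(qT * sT - qT) * (lam (σ k) - lamT (σ k))|
            + |(q * s - qT * sT) * lam (σ k)| := by rw [e]; exact abs_add_three _ _ _
        _ ≤ |q - qT| * (1 - lam (σ k)) + 2 * |lam (σ k) - lamT (σ k)|
            + |q * s - qT * sT| * lam (σ k) := by
            rw [abs_mul, abs_mul, abs_mul,
              abs_of_nonneg (by linarith [hlak.2] : (0:ℝ) ≤ 1 - lam (σ k)),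
              abs_of_nonneg hlak.1]
            have h1 : |qT * sT - qT| ≤ 2 := by
              rw [abs_le]; constructor <;> nlinarith
            have h2 : (0:ℝ) ≤ |lam (σ k) - lamT (σ k)| := abs_nonneg _
            nlinarith
    -- split the RHS sum at u = k
    have hsplit : Icc 1 (k + 1 - 1) = insert k (Icc 1 (k-1)) := by
      ext i; simp only [Finset.mem_Icc, Finset.mem_insert]; omega
    have hknot : k ∉ Icc 1 (k-1) := by simp only [Finset.mem_Icc]; omega
    rw [hsplit, Finset.sum_insert hknot]
    have h0 : k + 1 - k - 1 = 0 := by omega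
    rw [h0, pow_zero, mul_one]
    have hRHS : ∑ u ∈ Finset.Icc 1 (k - 1),
          (|q - qT| * (1 - lam (σ u)) + 2 * |lam (σ u) - lamT (σ u)| +
            |q * s - qT * sT| * lam (σ u)) * Afun σ lam q s u * qT ^ (k + 1 - u - 1)
        = qT * ∑ u ∈ Finset.Icc 1 (k - 1),
          (|q - qT| * (1 - lam (σ u)) + 2 * |lam (σ u) - lamT (σ u)| +
            |q * s - qT * sT| * lam (σ u)) * Afun σ lam q s u * qT ^ (k - u - 1) := by
      rw [Finset.mul_sum]
      refine Finset.sum_congr rfl fun u hu => ?_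
      simp only [Finset.mem_Icc] at hu
      have huu : k + 1 - u - 1 = (k - u - 1) + 1 := by omega
      rw [huu, pow_succ]; ring
    rw [hRHS, hrecA, hrecB]
    have e2 : q * (s * lam (σ k) + (1 - lam (σ k))) * Afun σ lam q s k
          - qT * (sT * lamT (σ k) + (1 - lamT (σ k))) * Afun σ lamT qT sT k
        = (q * (s * lam (σ k) + (1 - lam (σ k)))
            - qT * (sT * lamT (σ k) + (1 - lamT (σ k)))) * Afun σ lam q s k
          + qT * (sT * lamT (σ k) + (1 - lamT (σ k)))
            * (Afun σ lam q s k - Afun σ lamT qT sT k) := by ring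
    rw [e2]
    refine (abs_add_le _ _).trans ?_
    rw [abs_mul, abs_mul, abs_of_nonneg ha0, abs_of_nonneg hd0]
    have h3 := mul_le_mul_of_nonneg_right hcd ha0
    have h4 : qT * (sT * lamT (σ k) + (1 - lamT (σ k)))
          * |Afun σ lam q s k - Afun σ lamT qT sT k|
        ≤ qT * ∑ u ∈ Finset.Icc 1 (k - 1),
          (|q - qT| * (1 - lam (σ u)) + 2 * |lam (σ u) - lamT (σ u)| +
            |q * s - qT * sT| * lam (σ u)) * Afun σ lam q s u * qT ^ (k - u - 1) :=
      mul_le_mul hdqT ih' (abs_nonneg _) hqT0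
    linarith
end
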